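/- Let N ≥ 1 be an integer and let M > 1, b > 0, ℓ > 1, K > 0 and w > 0 satisfy 2N(M−1)/b ≤ w ≤ ( 1 + (b²/4) (ℓ − 1 + ℓ/K)² )^{−1/2}. Define u(t,x) = b^{1/(1−M)} (ℓ − 1/(1+wt))^{1/(1−M)} (1 − |x|²/(1+wt)²)^{1/(M−1)} on the open set Q = { (t,x) ∈ (0, 1/(wK)) × ℝ^N : |x| < 1 + wt }. Then at every point (t,x) ∈ Q the classical derivatives exist and the pointwise differential inequality ∂_t u(t,x) ≤ div_x ( u ∇_x(u^{M−1}) / √(1 + |∇_x(u^{M−1})|²) )(t,x) holds. -/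

import Mathlib

set_option maxHeartbeats 4000000

open RealInnerProductSpace

noncomputable section

/-- Classical divergence of a vector field on `ℝ^N`: the sum of the partial
derivatives of the components. -/
def divergence {N : ℕ} (V : EuclideanSpace ℝ (Fin N) → EuclideanSpace ℝ (Fin N))
    (x : EuclideanSpace ℝ (Fin N)) : ℝ :=
  ∑ i, ⟪fderiv ℝ V x (EuclideanSpace.single i 1), EuclideanSpace.single i 1⟫

/-- The flux `u ∇(u^{M−1}) / √(1 + |∇(u^{M−1})|²)` of the speed-limited porous medium
equation, as a spatial vector field at time `t`. -/
def fluxSL {N : ℕ} (M : ℝ) (u : ℝ → EuclideanSpace ℝ (Fin N) → ℝ) (t : ℝ)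
    (x : EuclideanSpace ℝ (Fin N)) : EuclideanSpace ℝ (Fin N) :=
  (u t x / Real.sqrt (1 + ‖gradient (fun y => u t y ^ (M-1)) x‖ ^ 2)) •
    gradient (fun y => u t y ^ (M-1)) x

/-- The spherical-cap subsolution of STATEMENT 6:
`u(t,x) = b^{1/(1−M)} (ℓ − 1/(1+wt))^{1/(1−M)} (1 − |x|²/(1+wt)²)^{1/(M−1)}`. -/
def uSL6 {N : ℕ} (M b ℓ w : ℝ) (t : ℝ) (x : EuclideanSpace ℝ (Fin N)) : ℝ :=
  b ^ (1/(1-M)) * (ℓ - 1/(1+w*t)) ^ (1/(1-M)) *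
    (1 - ‖x‖ ^ 2 / (1+w*t) ^ 2) ^ (1/(M-1))

/-- auxiliary radial profile of the flux -/
def psiAux (c R p σ : ℝ) : ℝ := -2*c * ((c*(R^2-σ))^p / Real.sqrt (1+4*c^2*σ))

lemma psiAux_hasDerivAt (c R p σ : ℝ) (hc : 0 < c) (hσ0 : 0 ≤ σ) (hσ : σ < R^2) :
    HasDerivAt (psiAux c R p)
      ((c*(R^2-σ))^p * (2*c*p/((R^2-σ)*Real.sqrt (1+4*c^2*σ))
        + 4*c^3/(Real.sqrt (1+4*c^2*σ))^3)) σ := by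
  have hQ : 0 < R^2 - σ := by linarith
  have hcQ : 0 < c*(R^2-σ) := by positivity
  have harg : (0:ℝ) < 1+4*c^2*σ := by positivity
  have hS : 0 < Real.sqrt (1+4*c^2*σ) := Real.sqrt_pos.2 harg
  have hSsq : Real.sqrt (1+4*c^2*σ) ^ 2 = 1+4*c^2*σ := Real.sq_sqrt harg.le
  have hinner : HasDerivAt (fun τ : ℝ => c*(R^2-τ)) (c * (0-1)) σ :=
    ((hasDerivAt_const σ (R^2)).sub (hasDerivAt_id σ)).const_mul c
  have hrpow : HasDerivAt (fun z : ℝ => z ^ p) (p * (c*(R^2-σ)) ^ (p-1)) (c*(R^2-σ)) :=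
    Real.hasDerivAt_rpow_const (Or.inl hcQ.ne')
  have hf1 : HasDerivAt (fun τ : ℝ => (c*(R^2-τ))^p) (p * (c*(R^2-σ)) ^ (p-1) * (c*(0-1))) σ :=
    by have := hrpow.comp σ hinner; exact this
  have hlin : HasDerivAt (fun τ : ℝ => 1+4*c^2*τ) (0 + 4*c^2*1) σ :=
    (hasDerivAt_const σ 1).add ((hasDerivAt_id σ).const_mul (4*c^2))
  have hsqrt : HasDerivAt Real.sqrt (1/(2*Real.sqrt (1+4*c^2*σ))) (1+4*c^2*σ) :=
    Real.hasDerivAt_sqrt harg.ne'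
  have hf2 : HasDerivAt (fun τ : ℝ => Real.sqrt (1+4*c^2*τ))
      (1/(2*Real.sqrt (1+4*c^2*σ)) * (0 + 4*c^2*1)) σ := hsqrt.comp σ hlin
  have hdiv := (hf1.div hf2 hS.ne').const_mul (-2*c)
  convert hdiv using 1
  · rfl
  · rfl
  · rfl
  have hsub : (c*(R^2-σ)) ^ (p-1) = (c*(R^2-σ))^p / (c*(R^2-σ)) := by
    rw [Real.rpow_sub hcQ, Real.rpow_one]
  rw [hsub]
  set S := Real.sqrt (1+4*c^2*σ) with hSdef
  clear_value S
  field_simp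
  ring

lemma radial_hasFDerivAt (N : ℕ) (ψ : ℝ → ℝ) (Dψ : ℝ) (x : EuclideanSpace ℝ (Fin N))
    (hψ : HasDerivAt ψ Dψ (‖x‖^2)) :
    HasFDerivAt (fun y : EuclideanSpace ℝ (Fin N) => ψ (‖y‖^2) • y)
      ((ψ (‖x‖^2)) • ContinuousLinearMap.id ℝ (EuclideanSpace ℝ (Fin N))
        + (Dψ • (2 • innerSL ℝ x)).smulRight x) x := by
  have h1 : HasFDerivAt (fun y : EuclideanSpace ℝ (Fin N) => ψ (‖y‖^2))
      (Dψ • (2 • innerSL ℝ x)) x :=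
    hψ.comp_hasFDerivAt x (hasStrictFDerivAt_norm_sq x).hasFDerivAt
  exact h1.smul (hasFDerivAt_id x)

lemma divergence_radial (N : ℕ) (ψ : ℝ → ℝ) (Dψ : ℝ) (x : EuclideanSpace ℝ (Fin N))
    (hψ : HasDerivAt ψ Dψ (‖x‖^2))
    (V : EuclideanSpace ℝ (Fin N) → EuclideanSpace ℝ (Fin N))
    (hV : V =ᶠ[nhds x] fun y => ψ (‖y‖^2) • y) :
    DifferentiableAt ℝ V x ∧ divergence V x = N * ψ (‖x‖^2) + 2*Dψ*‖x‖^2 := by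
  have hF := radial_hasFDerivAt N ψ Dψ x hψ
  constructor
  · exact hF.differentiableAt.congr_of_eventuallyEq hV
  · rw [divergence, hV.fderiv_eq, hF.fderiv]
    have hterm : ∀ i : Fin N,
        (⟪((ψ (‖x‖^2)) • ContinuousLinearMap.id ℝ (EuclideanSpace ℝ (Fin N))
        + (Dψ • (2 • innerSL ℝ x)).smulRight x) (EuclideanSpace.single i 1),
          EuclideanSpace.single i 1⟫ : ℝ)
        = ψ (‖x‖^2) + 2*Dψ*(x i * x i) := by
      intro i
      simp [inner_add_left, real_inner_smul_left, EuclideanSpace.inner_single_left,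
        EuclideanSpace.inner_single_right, real_inner_comm]
      ring
    rw [Finset.sum_congr rfl (fun i _ => hterm i), Finset.sum_add_distrib,
      Finset.sum_const, ← Finset.mul_sum]
    have hx2 : ∑ i, x i * x i = ‖x‖^2 := by
      have := real_inner_self_eq_norm_sq x
      rw [PiLp.inner_apply] at this
      simpa [sq] using this
    rw [hx2]
    simp [Finset.card_univ]

lemma base_rpow (M b α R y2 : ℝ) (hM : 1 < M) (hb : 0 < b) (hα : 0 < α) (hR : 0 < R)
    (hy2 : y2 < R^2) :
    b ^ (1/(1-M)) * α ^ (1/(1-M)) * (1 - y2/R^2) ^ (1/(M-1))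
      = (1/(b*α*R^2) * (R^2 - y2)) ^ (1/(M-1)) := by
  have hQ : 0 < R^2 - y2 := by linarith
  have hR2 : (0:ℝ) < R^2 := by positivity
  have hG : (0:ℝ) < 1 - y2/R^2 := by
    have : y2/R^2 < 1 := (div_lt_one hR2).2 hy2
    linarith
  have harg : 1/(b*α*R^2) * (R^2 - y2) = b⁻¹ * (α⁻¹ * (1 - y2/R^2)) := by
    field_simp
  have hneg : 1/(1-M) = -(1/(M-1)) := by
    rw [show (1:ℝ)-M = -(M-1) by ring, div_neg]
  rw [harg, Real.mul_rpow (by positivity) (by positivity),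
    Real.mul_rpow (by positivity) hG.le,
    Real.inv_rpow hb.le, Real.inv_rpow hα.le, hneg, Real.rpow_neg hb.le, Real.rpow_neg hα.le]
  ring

lemma pow_M_sub_one (M z : ℝ) (hM : 1 < M) (hz : 0 ≤ z) :
    (z ^ (1/(M-1))) ^ (M-1) = z := by
  rw [← Real.rpow_mul hz, one_div, inv_mul_cancel₀ (by linarith : M - 1 ≠ 0), Real.rpow_one]

theorem stmt_6 (N : ℕ) (hN : 1 ≤ N) (M b ℓ K w : ℝ)
    (hM : 1 < M) (hb : 0 < b) (hℓ : 1 < ℓ) (hK : 0 < K)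
    (hw1 : 2 * N * (M - 1) / b ≤ w)
    (hw2 : w ≤ (1 + b ^ 2 / 4 * (ℓ - 1 + ℓ / K) ^ 2) ^ (-(1:ℝ)/2)) :
    ∀ (t : ℝ) (x : EuclideanSpace ℝ (Fin N)),
      0 < t → t < 1 / (w * K) → ‖x‖ < 1 + w * t →
      (DifferentiableAt ℝ (fun s : ℝ => uSL6 M b ℓ w s x) t ∧
        DifferentiableAt ℝ (fun y => uSL6 M b ℓ w t y ^ (M-1)) x ∧
        DifferentiableAt ℝ (fluxSL M (uSL6 M b ℓ w) t) x) ∧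
      deriv (fun s : ℝ => uSL6 M b ℓ w s x) t ≤
        divergence (fluxSL M (uSL6 M b ℓ w) t) x := by
  intro t x ht htK hx
  have hN1 : (1:ℝ) ≤ (N:ℝ) := by exact_mod_cast hN
  have hM1 : (0:ℝ) < M - 1 := by linarith only [hM]
  have hw0 : 0 < w := lt_of_lt_of_le (by positivity) hw1
  obtain ⟨R, hR_def⟩ : ∃ r : ℝ, r = 1 + w*t := ⟨_, rfl⟩
  rw [← hR_def] at hx
  have hR1 : 1 < R := by rw [hR_def]; linarith only [mul_pos hw0 ht]
  have hR0 : 0 < R := by linarith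
  obtain ⟨α, hα_def⟩ : ∃ a : ℝ, a = ℓ - 1/R := ⟨_, rfl⟩
  have hα : 0 < α := by
    have h9 : 1/R < 1 := by rw [div_lt_one hR0]; linarith only [hR1]
    rw [hα_def]; linarith only [h9, hℓ]
  obtain ⟨c, hc_def⟩ : ∃ a : ℝ, a = 1/(b*α*R^2) := ⟨_, rfl⟩
  have hc : 0 < c := by rw [hc_def]; positivity
  obtain ⟨p, hp_def⟩ : ∃ a : ℝ, a = 1/(M-1) := ⟨_, rfl⟩
  have hp : 0 < p := by rw [hp_def]; positivity
  have hs0 : (0:ℝ) ≤ ‖x‖^2 := by positivity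
  have hsR : ‖x‖^2 < R^2 := by
    nlinarith only [hx, norm_nonneg x]
  have hQ : 0 < R^2 - ‖x‖^2 := by linarith only [hsR]
  obtain ⟨G, hG_def⟩ : ∃ a : ℝ, a = 1 - ‖x‖^2/R^2 := ⟨_, rfl⟩
  have hGposG : 0 < G := by
    rw [hG_def]
    have h2 : ‖x‖^2/R^2 < 1 := by rw [div_lt_one (by positivity)]; exact hsR
    linarith only [h2]
  have hGR : G*R^2 = R^2-‖x‖^2 := by rw [hG_def]; field_simp
  obtain ⟨S, hS_def⟩ : ∃ a : ℝ, a = Real.sqrt (1+4*c^2*‖x‖^2) := ⟨_, rfl⟩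
  have hSarg : (0:ℝ) < 1+4*c^2*‖x‖^2 := by positivity
  have hSpos : 0 < S := by rw [hS_def]; exact Real.sqrt_pos.2 hSarg
  have hSsq : S^2 = 1+4*c^2*‖x‖^2 := by rw [hS_def]; exact Real.sq_sqrt hSarg.le
  have hS1 : 1 ≤ S := by
    rw [hS_def]
    have h9 := Real.sqrt_le_sqrt (show (1:ℝ) ≤ 1+4*c^2*‖x‖^2 by
      linarith only [mul_nonneg (by positivity : (0:ℝ) ≤ 4*c^2) hs0])
    rwa [Real.sqrt_one] at h9
  -- value of u at points of the ball
  have key_u : ∀ y : EuclideanSpace ℝ (Fin N), ‖y‖ < R →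
      uSL6 M b ℓ w t y = (c*(R^2-‖y‖^2)) ^ p := by
    intro y hy
    have h1 : uSL6 M b ℓ w t y
        = b ^ (1/(1-M)) * α ^ (1/(1-M)) * (1 - ‖y‖^2/R^2) ^ (1/(M-1)) := by
      simp only [uSL6, hR_def, hα_def]
    have hy2 : ‖y‖^2 < R^2 := by nlinarith only [norm_nonneg y, hy]
    rw [h1, base_rpow M b α R (‖y‖^2) hM hb hα hR0 hy2, hc_def, hp_def]
  -- the open ball is a neighborhood
  have hball : ∀ y : EuclideanSpace ℝ (Fin N), ‖y‖ < R →
      {z : EuclideanSpace ℝ (Fin N) | ‖z‖ < R} ∈ nhds y := by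
    intro y hy
    exact (isOpen_lt continuous_norm continuous_const).mem_nhds hy
  -- gradient of u^(M-1)
  have key_grad : ∀ y : EuclideanSpace ℝ (Fin N), ‖y‖ < R →
      HasGradientAt (fun z => uSL6 M b ℓ w t z ^ (M-1)) ((-(2*c)) • y) y := by
    intro y hy
    have hf : HasFDerivAt (fun z : EuclideanSpace ℝ (Fin N) => (b*α)⁻¹ - c*‖z‖^2)
        (-(c • (2 • innerSL ℝ y))) y :=
      (((hasStrictFDerivAt_norm_sq y).hasFDerivAt.const_mul c).const_sub ((b*α)⁻¹))
    rw [hasFDerivAt_iff_hasGradientAt] at hf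
    have htd : (InnerProductSpace.toDual ℝ (EuclideanSpace ℝ (Fin N))) ((-(2*c)) • y)
        = -(c • (2 • innerSL ℝ y)) := by
      ext z
      simp [InnerProductSpace.toDual_apply_apply, real_inner_smul_left]
      ring
    have hvg : HasGradientAt (fun z : EuclideanSpace ℝ (Fin N) => (b*α)⁻¹ - c*‖z‖^2)
        ((-(2*c)) • y) y := by
      rw [← htd, LinearIsometryEquiv.symm_apply_apply] at hf
      exact hf
    apply hvg.congr_of_eventuallyEq
    filter_upwards [hball y hy] with z hz
    rw [key_u z hz, hp_def, pow_M_sub_one M _ hM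
      (mul_nonneg hc.le (by nlinarith only [norm_nonneg z, hz] : (0:ℝ) ≤ R^2-‖z‖^2))]
    rw [hc_def]
    field_simp
  -- flux formula
  have key_flux : ∀ y : EuclideanSpace ℝ (Fin N), ‖y‖ < R →
      fluxSL M (uSL6 M b ℓ w) t y = psiAux c R p (‖y‖^2) • y := by
    intro y hy
    rw [fluxSL, (key_grad y hy).gradient, key_u y hy]
    rw [norm_smul, smul_smul]
    congr 1
    rw [psiAux]
    have : ‖(-(2*c) : ℝ)‖ = 2*c := by
      rw [Real.norm_eq_abs, abs_of_nonpos (by linarith only [hc]), neg_neg]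
    rw [this]
    have harg : 1 + (2*c)^2 * ‖y‖^2 = 1 + 4*c^2*‖y‖^2 := by ring
    rw [mul_pow, harg]
    ring

  -- divergence of the flux
  have hVeq : fluxSL M (uSL6 M b ℓ w) t =ᶠ[nhds x] fun y => psiAux c R p (‖y‖^2) • y := by
    filter_upwards [hball x hx] with y hy
    exact key_flux y hy
  obtain ⟨hdiffV, hdivval⟩ := divergence_radial N (psiAux c R p) _ x
    (psiAux_hasDerivAt c R p (‖x‖^2) hc hs0 hsR) _ hVeq
  -- time derivative
  have hαfold : ℓ - 1/(1+w*t) = α := by rw [hα_def, hR_def]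
  have hαpos' : (0:ℝ) < ℓ - 1/(1+w*t) := by rw [hαfold]; exact hα
  have hAne : (1+w*t) ≠ 0 := by
    have h0 : (0:ℝ) < 1+w*t := by linarith only [mul_pos hw0 ht]
    exact h0.ne'
  have hGpos : (0:ℝ) < 1 - ‖x‖^2/(1+w*t)^2 := by
    have h1 : (0:ℝ) < (1+w*t)^2 := by positivity
    have h2 : ‖x‖^2/(1+w*t)^2 < 1 := by
      rw [div_lt_one h1]
      have := hsR; rw [hR_def] at this; exact this
    linarith only [h2]
  have hA : HasDerivAt (fun τ : ℝ => 1+w*τ) (w*1) t :=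
    ((hasDerivAt_id t).const_mul w).const_add 1
  have hα' := ((hasDerivAt_const t (1:ℝ)).div hA hAne).const_sub ℓ
  have hαr := (Real.hasDerivAt_rpow_const (p := 1/(1-M)) (Or.inl hαpos'.ne')).comp t hα'
  have hGt' := ((hasDerivAt_const t (‖x‖^2)).div (hA.pow 2) (pow_ne_zero 2 hAne)).const_sub 1
  have hGr := (Real.hasDerivAt_rpow_const (p := 1/(M-1)) (Or.inl hGpos.ne')).comp t hGt'
  have hder := (hαr.const_mul (b ^ (1/(1-M)))).mul hGr
  have hbase : b ^ (1/(1-M)) * (ℓ - 1/(1+w*t)) ^ (1/(1-M))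
      * (1 - ‖x‖^2/(1+w*t)^2) ^ (1/(M-1)) = (c*(R^2-‖x‖^2))^p := by
    rw [show b ^ (1/(1-M)) * (ℓ - 1/(1+w*t)) ^ (1/(1-M))
      * (1 - ‖x‖^2/(1+w*t)^2) ^ (1/(M-1)) = uSL6 M b ℓ w t x from rfl, key_u x hx]
  have h1M : (1:ℝ)-M ≠ 0 := by
    intro hcon; linarith only [hcon, hM]
  have hderU : HasDerivAt
      (fun τ : ℝ => b ^ (1/(1-M)) * (ℓ - 1/(1+w*τ)) ^ (1/(1-M))
        * (1 - ‖x‖^2/(1+w*τ)^2) ^ (1/(M-1)))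
      ((c*(R^2-‖x‖^2))^p * (p*w*(-(b*c) + 2*‖x‖^2/(R*(R^2-‖x‖^2))))) t := by
    convert hder using 1
    · rfl
    · rfl
    · rfl
    simp only [Function.comp_apply, Pi.pow_apply, Pi.div_apply]
    rw [Real.rpow_sub hαpos' (1/(1-M)) 1, Real.rpow_sub hGpos (1/(M-1)) 1,
      Real.rpow_one, Real.rpow_one]
    rw [← hR_def, ← hα_def, ← hG_def]
    have hbase2 : (c*(R^2-‖x‖^2))^p
        = b ^ (1/(1-M)) * α ^ (1/(1-M)) * G ^ (1/(M-1)) := by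
      rw [hc_def, hp_def, hG_def]
      exact (base_rpow M b α R (‖x‖^2) hM hb hα hR0 hsR).symm
    rw [hbase2, hp_def, hc_def, show R^2-‖x‖^2 = G*R^2 from hGR.symm,
      show (1:ℝ)/(1-M) = -(1/(M-1)) by rw [show (1:ℝ)-M = -(M-1) by ring, div_neg]]
    push_cast
    field_simp [hb.ne', hα.ne', hGposG.ne', hR0.ne', hM1.ne']
    ring
  have hfun_eq : (fun τ : ℝ => uSL6 M b ℓ w τ x)
      = (fun τ : ℝ => b ^ (1/(1-M)) * (ℓ - 1/(1+w*τ)) ^ (1/(1-M))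
        * (1 - ‖x‖^2/(1+w*τ)^2) ^ (1/(M-1))) := rfl
  have hkey : deriv (fun τ : ℝ => uSL6 M b ℓ w τ x) t
      = (c*(R^2-‖x‖^2))^p * (p*w*(-(b*c) + 2*‖x‖^2/(R*(R^2-‖x‖^2)))) := by
    rw [hfun_eq, hderU.deriv]
  -- the two parameter inequalities
  have hA1 : 2*c*(N:ℝ) ≤ p*w*b*c := by
    have h := (div_le_iff₀ hb).mp hw1
    have h2 := mul_le_mul_of_nonneg_right h hc.le
    rw [hp_def, show 1/(M-1)*w*b*c = (w*b*c)/(M-1) by ring, le_div_iff₀ hM1]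
    linarith only [h2]
  have hL : (0:ℝ) < ℓ - 1 + ℓ/K := by
    have h1 : (0:ℝ) < ℓ/K := by positivity
    linarith only [h1, hℓ]
  have hRK : R ≤ 1 + 1/K := by
    have h1 : w*t < w*(1/(w*K)) := by exact mul_lt_mul_of_pos_left htK hw0
    have h2 : w*(1/(w*K)) = 1/K := by field_simp
    rw [hR_def]; rw [h2] at h1; linarith only [h1]
  have hαR : α*R ≤ ℓ - 1 + ℓ/K := by
    have h3 : α*R = ℓ*R - 1 := by
      rw [hα_def, sub_mul, one_div, inv_mul_cancel₀ hR0.ne']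
    rw [h3]
    have h5 : ℓ*R ≤ ℓ*(1+1/K) := mul_le_mul_of_nonneg_left hRK (by positivity)
    have h6 : ℓ*(1+1/K) = ℓ + ℓ/K := by ring
    linarith only [h5, h6]
  have hcRb : 1 ≤ c*R*b*(ℓ-1+ℓ/K) := by
    have h4 : c*R*b = 1/(α*R) := by
      rw [hc_def]; field_simp
    rw [h4, show 1/(α*R)*(ℓ-1+ℓ/K) = (ℓ-1+ℓ/K)/(α*R) by ring,
      le_div_iff₀ (by positivity : (0:ℝ) < α*R)]
    linarith only [hαR]
  have hT : (0:ℝ) < 1 + b^2/4*(ℓ-1+ℓ/K)^2 := by positivity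
  have hwsq : w^2 ≤ (1 + b^2/4*(ℓ-1+ℓ/K)^2)⁻¹ := by
    have h2 := pow_le_pow_left₀ hw0.le hw2 2
    calc w^2 ≤ ((1 + b^2/4*(ℓ-1+ℓ/K)^2) ^ (-(1:ℝ)/2))^2 := h2
    _ = (1 + b^2/4*(ℓ-1+ℓ/K)^2)⁻¹ := by
        rw [← Real.rpow_natCast ((1 + b^2/4*(ℓ-1+ℓ/K)^2) ^ (-(1:ℝ)/2)) 2,
          ← Real.rpow_mul hT.le]
        norm_num [Real.rpow_neg_one]
  have hTineq : 1 + 4*c^2*R^2 ≤ 4*c^2*R^2 * (1 + b^2/4*(ℓ-1+ℓ/K)^2) := by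
    linarith only [mul_le_mul hcRb hcRb (by norm_num) (by positivity : (0:ℝ) ≤ c*R*b*(ℓ-1+ℓ/K))]
  have hw2core : w^2*(1+4*c^2*‖x‖^2) ≤ 4*c^2*R^2 := by
    have hs' : 1+4*c^2*‖x‖^2 ≤ 1+4*c^2*R^2 := by
      linarith only [mul_le_mul_of_nonneg_left hsR.le (by positivity : (0:ℝ) ≤ 4*c^2)]
    have h5 : w^2*(1+4*c^2*R^2)
        ≤ (1 + b^2/4*(ℓ-1+ℓ/K)^2)⁻¹ * (4*c^2*R^2*(1 + b^2/4*(ℓ-1+ℓ/K)^2)) :=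
      mul_le_mul hwsq hTineq (by positivity) (by positivity)
    have h6 : (1 + b^2/4*(ℓ-1+ℓ/K)^2)⁻¹ * (4*c^2*R^2*(1 + b^2/4*(ℓ-1+ℓ/K)^2))
        = 4*c^2*R^2 := by field_simp
    rw [h6] at h5
    linarith only [h5, mul_le_mul_of_nonneg_left hs' (sq_nonneg w)]
  have hA2 : w*S ≤ 2*c*R := by
    have h6 : S ≤ 2*c*R/w := by
      rw [show 2*c*R/w = Real.sqrt ((2*c*R/w)^2) from (Real.sqrt_sq (by positivity)).symm,
        hS_def]
      apply Real.sqrt_le_sqrt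
      rw [div_pow, le_div_iff₀ (by positivity : (0:ℝ) < w^2)]
      linarith only [hw2core]
    calc w*S ≤ w*(2*c*R/w) := mul_le_mul_of_nonneg_left h6 hw0.le
    _ = 2*c*R := by field_simp
  -- core pointwise inequality
  have core : p*w*(-(b*c) + 2*‖x‖^2/(R*(R^2-‖x‖^2)))
      ≤ -(2*c*(N:ℝ))/S + 4*c*p*‖x‖^2/((R^2-‖x‖^2)*S) + 8*c^3*‖x‖^2/S^3 := by
    have h1 : p*w*(-(b*c)) ≤ -(2*c*(N:ℝ))/S := by
      rw [le_div_iff₀ hSpos]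
      linarith only [mul_le_mul_of_nonneg_left hS1 (by positivity : (0:ℝ) ≤ p*w*b*c), hA1]
    have h2 : p*w*(2*‖x‖^2/(R*(R^2-‖x‖^2))) ≤ 4*c*p*‖x‖^2/((R^2-‖x‖^2)*S) := by
      rw [show p*w*(2*‖x‖^2/(R*(R^2-‖x‖^2))) = (p*w*(2*‖x‖^2))/(R*(R^2-‖x‖^2)) by ring,
        div_le_div_iff₀ (by positivity) (by positivity)]
      linarith only [mul_le_mul_of_nonneg_left hA2
        (by positivity : (0:ℝ) ≤ 2*p*‖x‖^2*(R^2-‖x‖^2))]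
    have h3 : (0:ℝ) ≤ 8*c^3*‖x‖^2/S^3 := by positivity
    have hexp : p*w*(-(b*c) + 2*‖x‖^2/(R*(R^2-‖x‖^2)))
        = p*w*(-(b*c)) + p*w*(2*‖x‖^2/(R*(R^2-‖x‖^2))) := by ring
    rw [hexp]
    linarith only [h1, h2, h3]
  -- assemble
  refine ⟨⟨?_, ?_, ?_⟩, ?_⟩
  · rw [show (fun s : ℝ => uSL6 M b ℓ w s x) = (fun τ : ℝ => uSL6 M b ℓ w τ x) from rfl,
      hfun_eq]
    exact hderU.differentiableAt
  · exact (key_grad x hx).differentiableAt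
  · exact hdiffV
  · rw [show deriv (fun s : ℝ => uSL6 M b ℓ w s x) t
        = deriv (fun τ : ℝ => uSL6 M b ℓ w τ x) t from rfl, hkey, hdivval]
    simp only [psiAux]
    rw [← hS_def]
    have hrhs : (N:ℝ)*(-2*c*((c*(R^2-‖x‖^2))^p/S))
        + 2*((c*(R^2-‖x‖^2))^p*(2*c*p/((R^2-‖x‖^2)*S)+4*c^3/S^3))*‖x‖^2
        = (c*(R^2-‖x‖^2))^p * (-(2*c*(N:ℝ))/S + 4*c*p*‖x‖^2/((R^2-‖x‖^2)*S)
            + 8*c^3*‖x‖^2/S^3) := by ring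
    rw [hrhs]
    exact mul_le_mul_of_nonneg_left core (Real.rpow_pos_of_pos (by positivity) p).le

end
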